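/- arXiv:2512.08119 — 2 statements merged into one kernel-verified Lean document; each statement's English description precedes it below -/
import Mathlib

section
/- Let q ∈ (0,1), let a ∈ ℂ be nonzero, and let n ∈ ℤ≥0. Then for all x ∈ ℂ: (1−a e^{ix})(1−a e^{−ix}) · H_n(cos x; qa | q) = −a · H_{n+1}(cos x; a|q) + H_n(cos x; a|q). -/
open Complex Finset

/-- q-Pochhammer symbol `(a;q)_k = ∏_{j=0}^{k-1} (1 - a q^j)`. -/
noncomputable def qPoch (q a : ℂ) (k : ℕ) : ℂ := ∏ j ∈ Finset.range k, (1 - a * q ^ j)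

/-- Continuous big q-Hermite polynomial `H_n(cos x; a | q)` as a function of `x ∈ ℂ`. -/
noncomputable def cbqHePoly (q a : ℂ) (n : ℕ) (x : ℂ) : ℂ :=
  a ^ (-(n : ℤ)) * ∑ k ∈ Finset.range (n + 1),
    qPoch q (q ^ (-(n : ℤ))) k * qPoch q (a * Complex.exp (Complex.I * x)) k *
      qPoch q (a * Complex.exp (-(Complex.I * x))) k * q ^ k / qPoch q q k

lemma qPoch_zero (q b : ℂ) : qPoch q b 0 = 1 := by simp [qPoch]

lemma qPoch_succ (q b : ℂ) (k : ℕ) : qPoch q b (k + 1) = qPoch q b k * (1 - b * q ^ k) :=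
  Finset.prod_range_succ _ _

lemma qPoch_succ' (q b : ℂ) (k : ℕ) : qPoch q b (k + 1) = (1 - b) * qPoch q (q * b) k := by
  rw [qPoch, Finset.prod_range_succ']
  simp only [pow_zero, mul_one]
  rw [mul_comm, qPoch]
  congr 1
  exact Finset.prod_congr rfl fun j _ => by ring

/-- The Christoffel relation (Theorem `thm:PhiPn` of the paper) for the continuous
big q-Hermite polynomials. -/
theorem continuous_big_q_hermite_christoffel
    (q : ℝ) (hq0 : 0 < q) (hq1 : q < 1)
    (a : ℂ) (ha : a ≠ 0) (n : ℕ) (x : ℂ) :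
    (1 - a * Complex.exp (Complex.I * x)) * (1 - a * Complex.exp (-(Complex.I * x))) *
      cbqHePoly (q : ℂ) ((q : ℂ) * a) n x
    = -a * cbqHePoly (q : ℂ) a (n + 1) x + cbqHePoly (q : ℂ) a n x := by
  have hqC : (q : ℂ) ≠ 0 := by exact_mod_cast hq0.ne'
  set u := a * Complex.exp (Complex.I * x) with hu
  set v := a * Complex.exp (-(Complex.I * x)) with hv
  -- nonvanishing of (q;q)_k
  have hG : ∀ k : ℕ, qPoch (q : ℂ) (q : ℂ) k ≠ 0 := by
    intro k
    rw [qPoch]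
    refine Finset.prod_ne_zero_iff.mpr fun j _ => ?_
    have h1 : ((q : ℂ)) * (q : ℂ) ^ j = ((q ^ (j + 1) : ℝ) : ℂ) := by push_cast; ring
    rw [h1, sub_ne_zero]
    intro h
    have h2 : (q : ℝ) ^ (j + 1) = 1 := by exact_mod_cast h.symm
    have h3 : (q : ℝ) ^ (j + 1) < 1 := pow_lt_one₀ hq0.le hq1 (Nat.succ_ne_zero j)
    linarith
  have h1q : ∀ k : ℕ, (1 : ℂ) - (q : ℂ) * (q : ℂ) ^ k ≠ 0 := by
    intro k
    have := hG (k + 1)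
    rw [qPoch_succ] at this
    exact right_ne_zero_of_mul this
  -- abbreviations
  set P : ℕ → ℂ := fun k => qPoch (q : ℂ) ((q : ℂ) ^ (-(n : ℤ))) k with hP
  set R : ℕ → ℂ := fun k => qPoch (q : ℂ) ((q : ℂ) ^ (-((n : ℕ) + 1 : ℕ) : ℤ)) k with hR
  set U : ℕ → ℂ := fun k => qPoch (q : ℂ) u k with hU
  set V : ℕ → ℂ := fun k => qPoch (q : ℂ) v k with hV
  set Uq : ℕ → ℂ := fun k => qPoch (q : ℂ) ((q : ℂ) * u) k with hUq
  set Vq : ℕ → ℂ := fun k => qPoch (q : ℂ) ((q : ℂ) * v) k with hVq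
  have hznn : ((q : ℂ)) ^ (-(n : ℤ)) = ((q : ℂ) ^ n)⁻¹ := by
    rw [zpow_neg, zpow_natCast]
  have hznn1 : ((q : ℂ)) ^ (-((n : ℕ) + 1 : ℕ) : ℤ) = ((q : ℂ) ^ (n + 1))⁻¹ := by
    rw [zpow_neg, zpow_natCast]
  -- core identity, term by term
  have key : ∀ k ∈ Finset.range (n + 1),
      (1 - u) * (1 - v) * (P k * Uq k * Vq k * (q : ℂ) ^ k / qPoch (q : ℂ) (q : ℂ) k)
      = (q : ℂ) ^ n *
        (P (k + 1) * U (k + 1) * V (k + 1) * (q : ℂ) ^ (k + 1) /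
            qPoch (q : ℂ) (q : ℂ) (k + 1)
          - R (k + 1) * U (k + 1) * V (k + 1) * (q : ℂ) ^ (k + 1) /
            qPoch (q : ℂ) (q : ℂ) (k + 1)) := by
    intro k _
    have hUk : U (k + 1) = (1 - u) * Uq k := qPoch_succ' _ _ _
    have hVk : V (k + 1) = (1 - v) * Vq k := qPoch_succ' _ _ _
    have hPk : P (k + 1) = P k * (1 - ((q : ℂ) ^ n)⁻¹ * (q : ℂ) ^ k) := by
      rw [hP]; simp only []
      rw [qPoch_succ, hznn]
    have hRk : R (k + 1) = (1 - ((q : ℂ) ^ (n + 1))⁻¹) * P k := by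
      rw [hR, hP]; simp only []
      rw [qPoch_succ', hznn1, hznn]
      congr 2
      rw [pow_succ', mul_inv, ← mul_assoc, mul_inv_cancel₀ hqC, one_mul]
    rw [hUk, hVk, hPk, hRk, qPoch_succ (q : ℂ) (q : ℂ) k]
    have hGk := hG k
    have h1qk := h1q k
    have hqn : ((q : ℂ)) ^ n ≠ 0 := pow_ne_zero _ hqC
    have hqn1 : ((q : ℂ)) ^ (n + 1) ≠ 0 := pow_ne_zero _ hqC
    field_simp
    have e : (1 - (q : ℂ) * (q : ℂ) ^ k)⁻¹ * (1 - (q : ℂ) * (q : ℂ) ^ k) = 1 := inv_mul_cancel₀ h1qk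
    linear_combination (-((1 - u) * (1 - v) * P k * Uq k * Vq k * (q : ℂ) * (q : ℂ) ^ k * (q : ℂ) ^ n)) * e
  -- the vanishing extra term
  have hPn1 : P (n + 1) = 0 := by
    rw [hP]; simp only []
    rw [qPoch]
    refine Finset.prod_eq_zero (Finset.self_mem_range_succ n) ?_
    rw [hznn]
    have : ((q : ℂ) ^ n)⁻¹ * (q : ℂ) ^ n = 1 := inv_mul_cancel₀ (pow_ne_zero _ hqC)
    rw [this]; ring
  -- assemble
  unfold cbqHePoly
  rw [← hu, ← hv]
  have harg1 : ∀ k : ℕ, qPoch (q : ℂ) ((q : ℂ) * a * Complex.exp (Complex.I * x)) k = Uq k := by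
    intro k; rw [hUq]; simp only []; rw [hu, mul_assoc]
  have harg2 : ∀ k : ℕ,
      qPoch (q : ℂ) ((q : ℂ) * a * Complex.exp (-(Complex.I * x))) k = Vq k := by
    intro k; rw [hVq]; simp only []; rw [hv, mul_assoc]
  simp only [harg1, harg2]
  -- rewrite the sums with the abbreviations
  have hS1 : ∑ k ∈ Finset.range (n + 1),
      qPoch (q : ℂ) ((q : ℂ) ^ (-(n : ℤ))) k * Uq k * Vq k * (q : ℂ) ^ k /
        qPoch (q : ℂ) (q : ℂ) k
      = ∑ k ∈ Finset.range (n + 1),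
        P k * Uq k * Vq k * (q : ℂ) ^ k / qPoch (q : ℂ) (q : ℂ) k := rfl
  have main : (1 - u) * (1 - v) * ∑ k ∈ Finset.range (n + 1),
        P k * Uq k * Vq k * (q : ℂ) ^ k / qPoch (q : ℂ) (q : ℂ) k
      = (q : ℂ) ^ n * ∑ k ∈ Finset.range (n + 1 + 1),
          (P k * U k * V k * (q : ℂ) ^ k / qPoch (q : ℂ) (q : ℂ) k
            - R k * U k * V k * (q : ℂ) ^ k / qPoch (q : ℂ) (q : ℂ) k) := by
    rw [Finset.sum_range_succ' (fun k =>
      P k * U k * V k * (q : ℂ) ^ k / qPoch (q : ℂ) (q : ℂ) k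
        - R k * U k * V k * (q : ℂ) ^ k / qPoch (q : ℂ) (q : ℂ) k) (n + 1)]
    have h0 : P 0 * U 0 * V 0 * (q : ℂ) ^ 0 / qPoch (q : ℂ) (q : ℂ) 0
        - R 0 * U 0 * V 0 * (q : ℂ) ^ 0 / qPoch (q : ℂ) (q : ℂ) 0 = 0 := by
      simp [hP, hR, hU, hV, qPoch_zero]
    rw [h0, add_zero, Finset.mul_sum, Finset.mul_sum]
    exact Finset.sum_congr rfl key
  have hsplit : ∑ k ∈ Finset.range (n + 1 + 1),
      (P k * U k * V k * (q : ℂ) ^ k / qPoch (q : ℂ) (q : ℂ) k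
        - R k * U k * V k * (q : ℂ) ^ k / qPoch (q : ℂ) (q : ℂ) k)
      = (∑ k ∈ Finset.range (n + 1 + 1),
          P k * U k * V k * (q : ℂ) ^ k / qPoch (q : ℂ) (q : ℂ) k)
        - ∑ k ∈ Finset.range (n + 1 + 1),
          R k * U k * V k * (q : ℂ) ^ k / qPoch (q : ℂ) (q : ℂ) k :=
    Finset.sum_sub_distrib _ _
  have hext : ∑ k ∈ Finset.range (n + 1 + 1),
      P k * U k * V k * (q : ℂ) ^ k / qPoch (q : ℂ) (q : ℂ) k
      = ∑ k ∈ Finset.range (n + 1),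
        P k * U k * V k * (q : ℂ) ^ k / qPoch (q : ℂ) (q : ℂ) k := by
    rw [Finset.sum_range_succ, hPn1]
    simp
  rw [hsplit, hext] at main
  show (1 - u) * (1 - v) * (((q : ℂ) * a) ^ (-(n : ℤ)) *
      ∑ k ∈ Finset.range (n + 1), P k * Uq k * Vq k * (q : ℂ) ^ k / qPoch (q : ℂ) (q : ℂ) k)
    = -a * (a ^ (-((n + 1 : ℕ) : ℤ)) *
        ∑ k ∈ Finset.range (n + 1 + 1),
          R k * U k * V k * (q : ℂ) ^ k / qPoch (q : ℂ) (q : ℂ) k)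
      + a ^ (-(n : ℤ)) *
        ∑ k ∈ Finset.range (n + 1), P k * U k * V k * (q : ℂ) ^ k / qPoch (q : ℂ) (q : ℂ) k
  set SA := ∑ k ∈ Finset.range (n + 1),
    P k * Uq k * Vq k * (q : ℂ) ^ k / qPoch (q : ℂ) (q : ℂ) k with hSA
  set SB := ∑ k ∈ Finset.range (n + 1 + 1),
    R k * U k * V k * (q : ℂ) ^ k / qPoch (q : ℂ) (q : ℂ) k with hSB
  set SC := ∑ k ∈ Finset.range (n + 1),
    P k * U k * V k * (q : ℂ) ^ k / qPoch (q : ℂ) (q : ℂ) k with hSC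
  have hzq : ((q : ℂ) * a) ^ (-(n : ℤ)) = ((q : ℂ) ^ n * a ^ n)⁻¹ := by
    rw [zpow_neg, zpow_natCast, mul_pow]
  have hza1 : a ^ (-((n + 1 : ℕ) : ℤ)) = (a ^ (n + 1))⁻¹ := by rw [zpow_neg, zpow_natCast]
  have hza : a ^ (-(n : ℤ)) = (a ^ n)⁻¹ := by rw [zpow_neg, zpow_natCast]
  rw [hzq, hza1, hza]
  have step : (1 - u) * (1 - v) * (((q : ℂ) ^ n * a ^ n)⁻¹ * SA)
      = ((q : ℂ) ^ n * a ^ n)⁻¹ * ((q : ℂ) ^ n * (SC - SB)) := by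
    rw [← main]; ring
  rw [step]
  have hqn : ((q : ℂ)) ^ n ≠ 0 := pow_ne_zero _ hqC
  have han : a ^ n ≠ 0 := pow_ne_zero _ ha
  have han1 : a ^ (n + 1) ≠ 0 := pow_ne_zero _ ha
  field_simp
  ring
end

section
/- Let h ∈ ℂ and n ∈ ℤ≥0. Then for all η ∈ ℂ: (2n−2h+1)(2n−2h+2)(2n−2h+3) · η² · P_n(η; h−1) = 4(2n−2h+1) · P_{n+2}(η; h) − 16(n−h+1) · P_{n+1}(η; h) + 4(2n−2h+3) · P_n(η; h). -/
open Complex Finset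

/-- Rising Pochhammer symbol `(x)_m = x (x+1) ⋯ (x+m-1)`. -/
noncomputable def poch (x : ℂ) (m : ℕ) : ℂ := ∏ j ∈ Finset.range m, (x + j)

/-- Bessel polynomial `P_n(η; h) = y_n(η; -2h-1)` as a function of `η ∈ ℂ`. -/
noncomputable def besselPoly (h : ℂ) (n : ℕ) (η : ℂ) : ℂ :=
  ∑ k ∈ Finset.range (n + 1),
    poch (-(n : ℂ)) k * poch ((n : ℂ) - 2 * h) k / (k.factorial : ℂ) * (-η / 2) ^ k

noncomputable def bterm (a b η : ℂ) (k : ℕ) : ℂ :=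
  poch a k * poch b k / (k.factorial : ℂ) * (-η / 2) ^ k

lemma besselPoly_eq (h : ℂ) (n : ℕ) (η : ℂ) :
    besselPoly h n η = ∑ k ∈ Finset.range (n + 1), bterm (-(n : ℂ)) ((n : ℂ) - 2 * h) η k := rfl

lemma poch_zero (x : ℂ) : poch x 0 = 1 := by simp [poch]

lemma poch_one (x : ℂ) : poch x 1 = x := by simp [poch]

lemma poch_succ (x : ℂ) (k : ℕ) : poch x (k + 1) = poch x k * (x + k) :=
  Finset.prod_range_succ _ _

lemma poch_succ' (x : ℂ) (k : ℕ) : poch x (k + 1) = x * poch (x + 1) k := by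
  unfold poch
  rw [Finset.prod_range_succ']
  push_cast
  rw [add_zero, mul_comm]
  congr 1
  exact Finset.prod_congr rfl fun j _ => by ring

lemma poch_add_two (x : ℂ) (k : ℕ) : poch x (k + 1 + 1) = x * (x + 1) * poch (x + 2) k := by
  rw [poch_succ', poch_succ', show (x + 1 + 1 : ℂ) = x + 2 by ring]
  ring

lemma poch_two_succ (x : ℂ) (k : ℕ) :
    poch x (k + 1 + 1) = poch x k * (x + k) * (x + k + 1) := by
  rw [poch_succ, poch_succ]
  push_cast
  ring

lemma poch_mixed (x : ℂ) (k : ℕ) :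
    poch x (k + 1 + 1) = x * poch (x + 1) k * (x + 1 + k) := by
  rw [poch_succ', poch_succ]
  ring

lemma poch_neg_nat (n k : ℕ) (hk : n < k) : poch (-(n : ℂ)) k = 0 := by
  apply Finset.prod_eq_zero (Finset.mem_range.2 hk)
  simp

lemma bessel_ext (h : ℂ) (n N : ℕ) (η : ℂ) (hN : n + 1 ≤ N) :
    besselPoly h n η = ∑ k ∈ Finset.range N, bterm (-(n : ℂ)) ((n : ℂ) - 2 * h) η k := by
  rw [besselPoly_eq]
  apply Finset.sum_subset (Finset.range_subset_range.2 hN)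
  intro k _ hk
  have hnk : n < k := by
    simp only [Finset.mem_range, not_lt] at hk
    omega
  simp [bterm, poch_neg_nat n k hnk]

/-- The Christoffel relation (Theorem `thm:PhiPnoQM` of the paper) for the Bessel
polynomials. -/
theorem bessel_christoffel (h : ℂ) (n : ℕ) (η : ℂ) :
    (2 * (n : ℂ) - 2 * h + 1) * (2 * (n : ℂ) - 2 * h + 2) * (2 * (n : ℂ) - 2 * h + 3) *
      η ^ 2 * besselPoly (h - 1) n η
    = 4 * (2 * (n : ℂ) - 2 * h + 1) * besselPoly h (n + 2) η
      - 16 * ((n : ℂ) - h + 1) * besselPoly h (n + 1) η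
      + 4 * (2 * (n : ℂ) - 2 * h + 3) * besselPoly h n η := by
  have hfac : ∀ k : ℕ, ((k.factorial : ℂ)) ≠ 0 := fun k =>
    Nat.cast_ne_zero.2 k.factorial_ne_zero
  have key : ∀ k : ℕ,
      (2 * (n : ℂ) - 2 * h + 1) * (2 * (n : ℂ) - 2 * h + 2) * (2 * (n : ℂ) - 2 * h + 3) *
        η ^ 2 * bterm (-(n : ℂ)) ((n : ℂ) - 2 * (h - 1)) η k
      = 4 * (2 * (n : ℂ) - 2 * h + 1) *
          bterm (-((n + 2 : ℕ) : ℂ)) (((n + 2 : ℕ) : ℂ) - 2 * h) η (k + 1 + 1)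
        - 16 * ((n : ℂ) - h + 1) *
          bterm (-((n + 1 : ℕ) : ℂ)) (((n + 1 : ℕ) : ℂ) - 2 * h) η (k + 1 + 1)
        + 4 * (2 * (n : ℂ) - 2 * h + 3) *
          bterm (-(n : ℂ)) ((n : ℂ) - 2 * h) η (k + 1 + 1) := by
    intro k
    unfold bterm
    push_cast
    rw [show ((n : ℂ) - 2 * (h - 1)) = (n : ℂ) - 2 * h + 2 by ring]
    rw [poch_add_two (-((n : ℂ) + 2)),
        show (-((n : ℂ) + 2) + 2) = -(n : ℂ) by ring,
        show (((n : ℂ) + 2) - 2 * h) = ((n : ℂ) - 2 * h + 2) by ring,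
        poch_two_succ ((n : ℂ) - 2 * h + 2) k,
        poch_mixed (-((n : ℂ) + 1)) k,
        show (-((n : ℂ) + 1) + 1) = -(n : ℂ) by ring,
        poch_mixed (((n : ℂ) + 1) - 2 * h) k,
        show (((n : ℂ) + 1) - 2 * h + 1) = ((n : ℂ) - 2 * h + 2) by ring,
        poch_two_succ (-(n : ℂ)) k,
        poch_add_two ((n : ℂ) - 2 * h) k,
        show ((n : ℂ) - 2 * h + 2) = ((n : ℂ) - 2 * h + 2) from rfl]
    rw [Nat.factorial_succ (k + 1), Nat.factorial_succ k]
    push_cast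
    have hf := hfac k
    set x : ℂ := -η / 2 with hx
    rw [pow_succ x (k + 1), pow_succ x k]
    generalize hF : (k.factorial : ℂ) = F at hf ⊢
    generalize x ^ k = X
    have h1 : ((k : ℂ) + 1) ≠ 0 := by
      have : ((k : ℂ) + 1) = ((k + 1 : ℕ) : ℂ) := by push_cast; ring
      rw [this]; exact Nat.cast_ne_zero.mpr (by omega)
    have h2 : ((k : ℂ) + 1 + 1) ≠ 0 := by
      have : ((k : ℂ) + 1 + 1) = ((k + 2 : ℕ) : ℂ) := by push_cast; ring
      rw [this]; exact Nat.cast_ne_zero.mpr (by omega)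
    field_simp
    ring
  rw [besselPoly_eq (h - 1) n η,
      bessel_ext h (n + 2) (n + 3) η (by omega),
      bessel_ext h (n + 1) (n + 3) η (by omega),
      bessel_ext h n (n + 3) η (by omega),
      Finset.mul_sum, Finset.mul_sum, Finset.mul_sum, Finset.mul_sum,
      ← Finset.sum_sub_distrib, ← Finset.sum_add_distrib,
      Finset.sum_range_succ' _ (n + 2), Finset.sum_range_succ' _ (n + 1)]
  have hz0 :
      4 * (2 * (n : ℂ) - 2 * h + 1) *
          bterm (-((n + 2 : ℕ) : ℂ)) (((n + 2 : ℕ) : ℂ) - 2 * h) η 0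
        - 16 * ((n : ℂ) - h + 1) *
          bterm (-((n + 1 : ℕ) : ℂ)) (((n + 1 : ℕ) : ℂ) - 2 * h) η 0
        + 4 * (2 * (n : ℂ) - 2 * h + 3) *
          bterm (-(n : ℂ)) ((n : ℂ) - 2 * h) η 0 = 0 := by
    simp only [bterm, poch_zero, Nat.factorial_zero, Nat.cast_one, pow_zero, mul_one,
      one_mul, div_one]
    ring
  have hz1 :
      4 * (2 * (n : ℂ) - 2 * h + 1) *
          bterm (-((n + 2 : ℕ) : ℂ)) (((n + 2 : ℕ) : ℂ) - 2 * h) η (0 + 1)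
        - 16 * ((n : ℂ) - h + 1) *
          bterm (-((n + 1 : ℕ) : ℂ)) (((n + 1 : ℕ) : ℂ) - 2 * h) η (0 + 1)
        + 4 * (2 * (n : ℂ) - 2 * h + 3) *
          bterm (-(n : ℂ)) ((n : ℂ) - 2 * h) η (0 + 1) = 0 := by
    simp only [zero_add, bterm, poch_one, Nat.factorial_one, Nat.cast_one, pow_one, div_one]
    push_cast
    ring
  rw [Finset.sum_congr rfl (fun k _ => key k), hz1, hz0]
  ring
end
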